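/- arXiv:2004.01293 — 2 statements merged into one kernel-verified Lean document; each statement's English description precedes it below -/
import Mathlib

section
/- Let G be a weighted directed graph on vertex set V = {1,…,n} and let M_13 be the simple bi-directional 2-star motif with vertices {1,2,3} and edge set E_M = {(1,2),(2,1),(2,3),(3,2)}. Then the functional motif adjacency matrix of M_13 in G satisfies M^func = (1/4)·(C + Cᵀ), where C = J_d ∘ (G_d J_n) + G_d ∘ (J_d J_n) + J_n ∘ (J_d G_d). -/
open scoped Classical BigOperators Matrix

noncomputable section

/-- A motif on `m` vertices: a weakly connected loopless directed graph on the vertex set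
`Fin m`, given by its edge set. -/
structure Motif (m : ℕ) where
  edges : Finset (Fin m × Fin m)
  irrefl : ∀ e ∈ edges, e.1 ≠ e.2
  connected : (SimpleGraph.fromRel (fun u v => (u, v) ∈ edges)).Connected

variable {n m : ℕ}

/-- Edge set of the weighted directed graph with weight matrix `G`:
`E = {(i,j) : i ≠ j and G i j > 0}`. -/
def edgeFinset (G : Matrix (Fin n) (Fin n) ℝ) : Finset (Fin n × Fin n) :=
  Finset.univ.filter fun p => p.1 ≠ p.2 ∧ 0 < G p.1 p.2

/-- Directed-edge indicator matrix `J`. -/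
def Jmat (G : Matrix (Fin n) (Fin n) ℝ) : Matrix (Fin n) (Fin n) ℝ :=
  fun i j => if (i, j) ∈ edgeFinset G then 1 else 0

/-- Single-edge indicator matrix `J_s`. -/
def Jsmat (G : Matrix (Fin n) (Fin n) ℝ) : Matrix (Fin n) (Fin n) ℝ :=
  fun i j => if (i, j) ∈ edgeFinset G ∧ (j, i) ∉ edgeFinset G then 1 else 0

/-- Double-edge indicator matrix `J_d`. -/
def Jdmat (G : Matrix (Fin n) (Fin n) ℝ) : Matrix (Fin n) (Fin n) ℝ :=
  fun i j => if (i, j) ∈ edgeFinset G ∧ (j, i) ∈ edgeFinset G then 1 else 0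

/-- Missing-edge indicator matrix `J_0`. -/
def J0mat (G : Matrix (Fin n) (Fin n) ℝ) : Matrix (Fin n) (Fin n) ℝ :=
  fun i j => if (i, j) ∉ edgeFinset G ∧ (j, i) ∉ edgeFinset G ∧ i ≠ j then 1 else 0

/-- Vertex-distinct indicator matrix `J_n`. -/
def Jnmat (n : ℕ) : Matrix (Fin n) (Fin n) ℝ :=
  fun i j => if i ≠ j then 1 else 0

/-- Single-edge weighted matrix `G_s`. -/
def Gsmat (G : Matrix (Fin n) (Fin n) ℝ) : Matrix (Fin n) (Fin n) ℝ :=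
  fun i j => if (i, j) ∈ edgeFinset G ∧ (j, i) ∉ edgeFinset G then G i j else 0

/-- Double-edge weighted matrix `G_d`. -/
def Gdmat (G : Matrix (Fin n) (Fin n) ℝ) : Matrix (Fin n) (Fin n) ℝ :=
  fun i j => if (i, j) ∈ edgeFinset G ∧ (j, i) ∈ edgeFinset G then G i j + G j i else 0

/-- Entrywise (Hadamard) product of matrices. -/
def had (A B : Matrix (Fin n) (Fin n) ℝ) : Matrix (Fin n) (Fin n) ℝ :=
  fun i j => A i j * B i j

/-- Well-formedness of a candidate subgraph `H = (V_H, E_H)` of a graph on `Fin n`: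
each edge joins two distinct vertices of `H`. -/
def IsGraphPair (H : Finset (Fin n) × Finset (Fin n × Fin n)) : Prop :=
  ∀ e ∈ H.2, e.1 ∈ H.1 ∧ e.2 ∈ H.1 ∧ e.1 ≠ e.2

/-- `φ` is an isomorphism from the motif `M` onto the graph `H = (V_H, E_H)`. -/
def IsIso (M : Motif m) (H : Finset (Fin n) × Finset (Fin n × Fin n))
    (φ : Fin m → Fin n) : Prop :=
  Function.Injective φ ∧ Finset.image φ Finset.univ = H.1 ∧
    ∀ u v : Fin m, (u, v) ∈ M.edges ↔ (φ u, φ v) ∈ H.2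

/-- `H` is a functional instance of motif `M` in the graph with weight matrix `G`,
i.e. `M ≅ H ≤ G`. -/
def IsFuncInstance (M : Motif m) (G : Matrix (Fin n) (Fin n) ℝ)
    (H : Finset (Fin n) × Finset (Fin n × Fin n)) : Prop :=
  IsGraphPair H ∧ H.2 ⊆ edgeFinset G ∧ ∃ φ, IsIso M H φ

/-- `H` is a structural instance of motif `M` in the graph with weight matrix `G`,
i.e. `M ≅ H < G` (`H` an induced subgraph: `E_H = E ∩ (V_H × V_H)`). -/
def IsStrucInstance (M : Motif m) (G : Matrix (Fin n) (Fin n) ℝ)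
    (H : Finset (Fin n) × Finset (Fin n × Fin n)) : Prop :=
  IsGraphPair H ∧
    H.2 = (edgeFinset G).filter (fun e => e.1 ∈ H.1 ∧ e.2 ∈ H.1) ∧
    ∃ φ, IsIso M H φ

/-- `{i, j}` is an anchored pair of the instance `H`: there is an isomorphism `φ` from
`M` to `H` and distinct anchors `a, b ∈ A` with `φ a = i` and `φ b = j`. -/
def AnchoredPair (M : Motif m) (A : Finset (Fin m))
    (H : Finset (Fin n) × Finset (Fin n × Fin n)) (i j : Fin n) : Prop :=
  ∃ φ, IsIso M H φ ∧ ∃ a ∈ A, ∃ b ∈ A, a ≠ b ∧ φ a = i ∧ φ b = j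

/-- The functional motif adjacency matrix of the motif `(M, A)` in the graph
with weight matrix `G`. -/
def mamFunc (M : Motif m) (A : Finset (Fin m)) (G : Matrix (Fin n) (Fin n) ℝ) :
    Matrix (Fin n) (Fin n) ℝ :=
  fun i j => (1 / (M.edges.card : ℝ)) *
    ∑ H : Finset (Fin n) × Finset (Fin n × Fin n),
      if IsFuncInstance M G H ∧ AnchoredPair M A H i j then ∑ e ∈ H.2, G e.1 e.2 else 0

/-- The structural motif adjacency matrix of the motif `(M, A)` in the graph
with weight matrix `G`. -/
def mamStruc (M : Motif m) (A : Finset (Fin m)) (G : Matrix (Fin n) (Fin n) ℝ) :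
    Matrix (Fin n) (Fin n) ℝ :=
  fun i j => (1 / (M.edges.card : ℝ)) *
    ∑ H : Finset (Fin n) × Finset (Fin n × Fin n),
      if IsStrucInstance M G H ∧ AnchoredPair M A H i j then ∑ e ∈ H.2, G e.1 e.2 else 0
namespace M13Aux

def Hins (y x z : Fin n) : Finset (Fin n) × Finset (Fin n × Fin n) :=
  ({x, y, z}, {(x,y),(y,x),(y,z),(z,y)})

def Cond (G : Matrix (Fin n) (Fin n) ℝ) (y x z : Fin n) : Prop :=
  x ≠ y ∧ y ≠ z ∧ x ≠ z ∧ (x,y) ∈ edgeFinset G ∧ (y,x) ∈ edgeFinset G ∧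
    (y,z) ∈ edgeFinset G ∧ (z,y) ∈ edgeFinset G

lemma inst_iff (G : Matrix (Fin n) (Fin n) ℝ)
    (M13 : Motif 3) (hM : M13.edges = {((0 : Fin 3), 1), (1, 0), (1, 2), (2, 1)})
    (i j : Fin n) (H : Finset (Fin n) × Finset (Fin n × Fin n)) :
    (IsFuncInstance M13 G H ∧ AnchoredPair M13 Finset.univ H i j) ↔
    ∃ y x z : Fin n, Cond G y x z ∧ i ∈ ({x, y, z} : Finset (Fin n)) ∧
      j ∈ ({x, y, z} : Finset (Fin n)) ∧ i ≠ j ∧ H = Hins y x z := by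
  constructor
  · rintro ⟨⟨hGP, hsub, φ, hφinj, hφim, hφe⟩, ψ, ⟨hψinj, hψim, hψe⟩, a, -, b, -, hab, ha, hb⟩
    refine ⟨φ 1, φ 0, φ 2, ?_, ?_, ?_, ?_, ?_⟩
    · have e01 : ((φ 0, φ 1) : Fin n × Fin n) ∈ H.2 := (hφe 0 1).mp (by rw [hM]; decide)
      have e10 : ((φ 1, φ 0) : Fin n × Fin n) ∈ H.2 := (hφe 1 0).mp (by rw [hM]; decide)
      have e12 : ((φ 1, φ 2) : Fin n × Fin n) ∈ H.2 := (hφe 1 2).mp (by rw [hM]; decide)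
      have e21 : ((φ 2, φ 1) : Fin n × Fin n) ∈ H.2 := (hφe 2 1).mp (by rw [hM]; decide)
      exact ⟨fun h => (by decide : (0:Fin 3) ≠ 1) (hφinj h),
        fun h => (by decide : (1:Fin 3) ≠ 2) (hφinj h),
        fun h => (by decide : (0:Fin 3) ≠ 2) (hφinj h),
        hsub e01, hsub e10, hsub e12, hsub e21⟩
    · have : i ∈ H.1 := by
        rw [← hψim, ← ha]; exact Finset.mem_image_of_mem ψ (Finset.mem_univ a)
      rw [← hφim] at this
      simp only [Finset.mem_image, Finset.mem_univ, true_and] at this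
      obtain ⟨u, hu⟩ := this
      fin_cases u <;> simp [← hu, Finset.mem_insert]
    · have : j ∈ H.1 := by
        rw [← hψim, ← hb]; exact Finset.mem_image_of_mem ψ (Finset.mem_univ b)
      rw [← hφim] at this
      simp only [Finset.mem_image, Finset.mem_univ, true_and] at this
      obtain ⟨u, hu⟩ := this
      fin_cases u <;> simp [← hu, Finset.mem_insert]
    · rw [← ha, ← hb]; exact fun h => hab (hψinj h)
    · have h1 : H.1 = {φ 0, φ 1, φ 2} := by
        rw [← hφim]
        have : (Finset.univ : Finset (Fin 3)) = {0, 1, 2} := by decide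
        rw [this]
        simp [Finset.image_insert]
      have h2 : H.2 = {(φ 0, φ 1), (φ 1, φ 0), (φ 1, φ 2), (φ 2, φ 1)} := by
        ext e
        constructor
        · intro he
          obtain ⟨he1, he2, -⟩ := hGP e he
          rw [← hφim] at he1 he2
          simp only [Finset.mem_image, Finset.mem_univ, true_and] at he1 he2
          obtain ⟨u, hu⟩ := he1
          obtain ⟨v, hv⟩ := he2
          have huv : (u, v) ∈ M13.edges := by
            refine (hφe u v).mpr ?_
            rw [hu, hv]
            exact he
          rw [hM] at huv
          fin_cases huv <;> simp [Prod.ext_iff, ← hu, ← hv]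
        · intro he
          simp only [Finset.mem_insert, Finset.mem_singleton] at he
          rcases he with h | h | h | h <;> subst h
          · exact (hφe 0 1).mp (by rw [hM]; decide)
          · exact (hφe 1 0).mp (by rw [hM]; decide)
          · exact (hφe 1 2).mp (by rw [hM]; decide)
          · exact (hφe 2 1).mp (by rw [hM]; decide)
      have : H = (H.1, H.2) := rfl
      rw [this, h1, h2]
      rfl
  · rintro ⟨y, x, z, ⟨hxy, hyz, hxz, e1, e2, e3, e4⟩, hi, hj, hij, rfl⟩
    have hiso : IsIso M13 (Hins y x z) ![x, y, z] := by
      refine ⟨?_, ?_, ?_⟩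
      · intro u v huv
        fin_cases u <;> fin_cases v <;> simp_all
      · have : (Finset.univ : Finset (Fin 3)) = {0, 1, 2} := by decide
        rw [this]
        simp [Hins, Finset.image_insert]
      · intro u v
        rw [hM]
        fin_cases u <;> fin_cases v <;>
          simp [Hins, Prod.ext_iff, hxy, hyz, hxz, hxy.symm, hyz.symm, hxz.symm, Ne.symm]
    refine ⟨⟨?_, ?_, ![x, y, z], hiso⟩, ![x, y, z], hiso, ?_⟩
    · intro e he
      simp only [Hins, Finset.mem_insert, Finset.mem_singleton] at he
      rcases he with h | h | h | h <;> subst h <;>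
        simp [Hins, hxy, hyz, hxz, hxy.symm, hyz.symm, hxz.symm]
    · intro e he
      simp only [Hins, Finset.mem_insert, Finset.mem_singleton] at he
      rcases he with h | h | h | h <;> subst h <;> assumption
    · have hgi : ∃ a : Fin 3, ![x, y, z] a = i := by
        simp only [Finset.mem_insert, Finset.mem_singleton] at hi
        rcases hi with h | h | h
        · exact ⟨0, by simp [h]⟩
        · exact ⟨1, by simp [h]⟩
        · exact ⟨2, by simp [h]⟩
      have hgj : ∃ b : Fin 3, ![x, y, z] b = j := by
        simp only [Finset.mem_insert, Finset.mem_singleton] at hj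
        rcases hj with h | h | h
        · exact ⟨0, by simp [h]⟩
        · exact ⟨1, by simp [h]⟩
        · exact ⟨2, by simp [h]⟩
      obtain ⟨a, ha⟩ := hgi
      obtain ⟨b, hb⟩ := hgj
      exact ⟨a, Finset.mem_univ a, b, Finset.mem_univ b, fun h => hij (by rw [← ha, h, hb]),
        ha, hb⟩

lemma Hins_swap (y x z : Fin n) : Hins y x z = Hins y z x := by
  simp only [Hins, Prod.mk.injEq]
  constructor
  · ext v; simp only [Finset.mem_insert, Finset.mem_singleton]; tauto
  · ext e; simp only [Finset.mem_insert, Finset.mem_singleton]; tauto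

lemma weight_eq (G : Matrix (Fin n) (Fin n) ℝ) {x y z : Fin n}
    (hxy : x ≠ y) (hyz : y ≠ z) (hxz : x ≠ z) :
    ∑ e ∈ ({(x,y),(y,x),(y,z),(z,y)} : Finset (Fin n × Fin n)), G e.1 e.2 =
      G x y + G y x + G y z + G z y := by
  have h1 : ((x,y) : Fin n × Fin n) ∉ ({(y,x),(y,z),(z,y)} : Finset (Fin n × Fin n)) := by
    intro hmem
    simp only [Finset.mem_insert, Finset.mem_singleton, Prod.mk.injEq] at hmem
    rcases hmem with ⟨h,-⟩|⟨h,-⟩|⟨h,-⟩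
    · exact hxy h
    · exact hxy h
    · exact hxz h
  have h2 : ((y,x) : Fin n × Fin n) ∉ ({(y,z),(z,y)} : Finset (Fin n × Fin n)) := by
    intro hmem
    simp only [Finset.mem_insert, Finset.mem_singleton, Prod.mk.injEq] at hmem
    rcases hmem with ⟨-,h⟩|⟨-,h⟩
    · exact hxz h
    · exact hxy h
  have h3 : ((y,z) : Fin n × Fin n) ∉ ({(z,y)} : Finset (Fin n × Fin n)) := by
    intro hmem
    simp only [Finset.mem_singleton, Prod.mk.injEq] at hmem
    exact hyz hmem.1
  rw [Finset.sum_insert h1, Finset.sum_insert h2, Finset.sum_insert h3, Finset.sum_singleton]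
  ring

/-- The set of normalized triple descriptions of instances anchored at `i, j`. -/
def T (G : Matrix (Fin n) (Fin n) ℝ) (i j : Fin n) : Finset (Fin n × Fin n × Fin n) :=
  Finset.univ.filter (fun t => Cond G t.1 t.2.1 t.2.2 ∧
    i ∈ ({t.2.1, t.1, t.2.2} : Finset (Fin n)) ∧
    j ∈ ({t.2.1, t.1, t.2.2} : Finset (Fin n)) ∧ i ≠ j ∧ t.2.1 < t.2.2)

lemma sum_instances (G : Matrix (Fin n) (Fin n) ℝ)
    (M13 : Motif 3) (hM : M13.edges = {((0 : Fin 3), 1), (1, 0), (1, 2), (2, 1)})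
    (i j : Fin n) :
    (∑ H : Finset (Fin n) × Finset (Fin n × Fin n),
      if IsFuncInstance M13 G H ∧ AnchoredPair M13 Finset.univ H i j then
        ∑ e ∈ H.2, G e.1 e.2 else 0)
    = ∑ t ∈ T G i j, (G t.2.1 t.1 + G t.1 t.2.1 + G t.1 t.2.2 + G t.2.2 t.1) := by
  rw [← Finset.sum_filter]
  refine (Finset.sum_nbij (fun t => Hins t.1 t.2.1 t.2.2) ?_ ?_ ?_ ?_).symm
  · -- maps to
    intro t ht
    simp only [T, Finset.mem_filter, Finset.mem_univ, true_and] at ht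
    obtain ⟨hc, hi, hj, hij, -⟩ := ht
    simp only [Finset.mem_filter, Finset.mem_univ, true_and]
    exact (inst_iff G M13 hM i j _).mpr ⟨t.1, t.2.1, t.2.2, hc, hi, hj, hij, rfl⟩
  · -- injective
    rintro ⟨y, x, z⟩ ht ⟨y', x', z'⟩ ht' heq
    simp only [T, Finset.coe_filter, Set.mem_setOf_eq, Finset.mem_univ, true_and] at ht ht'
    obtain ⟨⟨hxy, hyz, hxz, -, -, -, -⟩, -, -, -, hlt⟩ := ht
    obtain ⟨⟨hxy', hyz', hxz', -, -, -, -⟩, -, -, -, hlt'⟩ := ht'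
    have h2 : ({(x,y),(y,x),(y,z),(z,y)} : Finset (Fin n × Fin n)) =
        {(x',y'),(y',x'),(y',z'),(z',y')} := congrArg Prod.snd heq
    have m1 : ((x,y) : Fin n × Fin n) ∈
        ({(x',y'),(y',x'),(y',z'),(z',y')} : Finset (Fin n × Fin n)) := by
      rw [← h2]; simp
    have m2 : ((y,z) : Fin n × Fin n) ∈
        ({(x',y'),(y',x'),(y',z'),(z',y')} : Finset (Fin n × Fin n)) := by
      rw [← h2]; simp
    have m3 : ((z,y) : Fin n × Fin n) ∈
        ({(x',y'),(y',x'),(y',z'),(z',y')} : Finset (Fin n × Fin n)) := by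
      rw [← h2]; simp
    have m4 : ((x',y') : Fin n × Fin n) ∈
        ({(x,y),(y,x),(y,z),(z,y)} : Finset (Fin n × Fin n)) := by
      rw [h2]; simp
    simp only [Finset.mem_insert, Finset.mem_singleton, Prod.mk.injEq] at m1 m2 m3 m4
    have d1 : y' = x ∨ y' = y := by
      rcases m1 with ⟨h1,h2⟩|⟨h1,h2⟩|⟨h1,h2⟩|⟨h1,h2⟩
      · exact Or.inr h2.symm
      · exact Or.inl h1.symm
      · exact Or.inl h1.symm
      · exact Or.inr h2.symm
    have d2 : y' = y ∨ y' = z := by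
      rcases m2 with ⟨h1,h2⟩|⟨h1,h2⟩|⟨h1,h2⟩|⟨h1,h2⟩
      · exact Or.inr h2.symm
      · exact Or.inl h1.symm
      · exact Or.inl h1.symm
      · exact Or.inr h2.symm
    have hyy : y = y' := by
      rcases d1 with h|h <;> rcases d2 with h'|h'
      · exact h'.symm
      · exact absurd (h.symm.trans h') hxz
      · exact h'.symm
      · exact h.symm
    subst hyy
    have dx : x = x' ∨ x = z' := by
      rcases m1 with ⟨h1,h2⟩|⟨h1,h2⟩|⟨h1,h2⟩|⟨h1,h2⟩
      · exact Or.inl h1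
      · exact absurd h1 hxy
      · exact absurd h1 hxy
      · exact Or.inr h1
    have dz : z = x' ∨ z = z' := by
      rcases m3 with ⟨h1,h2⟩|⟨h1,h2⟩|⟨h1,h2⟩|⟨h1,h2⟩
      · exact Or.inl h1
      · exact absurd h1 (Ne.symm hyz)
      · exact absurd h1 (Ne.symm hyz)
      · exact Or.inr h1
    have dx' : x' = x ∨ x' = z := by
      rcases m4 with ⟨h1,h2⟩|⟨h1,h2⟩|⟨h1,h2⟩|⟨h1,h2⟩
      · exact Or.inl h1
      · exact absurd h2 (Ne.symm hxy)
      · exact absurd h2 hyz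
      · exact Or.inr h1
    rcases dx with hx|hx
    · rcases dz with hz|hz
      · exact absurd (hx.trans hz.symm) hxz
      · rw [hx, hz]
    · rcases dx' with hx'|hx'
      · rw [hx', ← hx] at hlt'
        exact absurd hlt' (lt_irrefl x)
      · rw [hx'] at hlt'
        rw [hx] at hlt
        exact absurd (hlt'.trans hlt) (lt_irrefl z)
  · -- surjective
    intro H hH
    simp only [Finset.coe_filter, Set.mem_setOf_eq, Finset.mem_univ, true_and] at hH
    obtain ⟨y, x, z, hc, hi, hj, hij, rfl⟩ := (inst_iff G M13 hM i j H).mp hH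
    obtain ⟨hxy, hyz, hxz, e1, e2, e3, e4⟩ := hc
    rcases lt_or_gt_of_ne hxz with hlt | hlt
    · refine ⟨(y, x, z), ?_, rfl⟩
      simp only [Finset.mem_coe, T, Finset.mem_filter, Finset.mem_univ, true_and]
      exact ⟨⟨hxy, hyz, hxz, e1, e2, e3, e4⟩, hi, hj, hij, hlt⟩
    · refine ⟨(y, z, x), ?_, (Hins_swap y x z).symm⟩
      simp only [Finset.mem_coe, T, Finset.mem_filter, Finset.mem_univ, true_and]
      refine ⟨⟨hyz.symm, hxy.symm, hxz.symm, e4, e3, e2, e1⟩, ?_, ?_, hij, hlt⟩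
      · simp only [Finset.mem_insert, Finset.mem_singleton] at hi ⊢; tauto
      · simp only [Finset.mem_insert, Finset.mem_singleton] at hj ⊢; tauto
  · -- values
    rintro ⟨y, x, z⟩ ht
    simp only [T, Finset.mem_filter, Finset.mem_univ, true_and] at ht
    obtain ⟨⟨hxy, hyz, hxz, -, -, -, -⟩, -⟩ := ht
    exact (weight_eq G hxy hyz hxz).symm

/-- The triple descriptions without the normalizing order condition. -/
def T2 (G : Matrix (Fin n) (Fin n) ℝ) (i j : Fin n) : Finset (Fin n × Fin n × Fin n) :=
  Finset.univ.filter (fun t => Cond G t.1 t.2.1 t.2.2 ∧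
    i ∈ ({t.2.1, t.1, t.2.2} : Finset (Fin n)) ∧
    j ∈ ({t.2.1, t.1, t.2.2} : Finset (Fin n)) ∧ i ≠ j)

lemma sum_T2_double (G : Matrix (Fin n) (Fin n) ℝ) (i j : Fin n) :
    ∑ t ∈ T2 G i j, (G t.2.1 t.1 + G t.1 t.2.1 + G t.1 t.2.2 + G t.2.2 t.1)
    = 2 * ∑ t ∈ T G i j, (G t.2.1 t.1 + G t.1 t.2.1 + G t.1 t.2.2 + G t.2.2 t.1) := by
  have hsplit := Finset.sum_filter_add_sum_filter_not (T2 G i j)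
    (fun t => t.2.1 < t.2.2) (fun t => G t.2.1 t.1 + G t.1 t.2.1 + G t.1 t.2.2 + G t.2.2 t.1)
  have h1 : (T2 G i j).filter (fun t => t.2.1 < t.2.2) = T G i j := by
    ext t
    simp only [T2, T, Finset.mem_filter, Finset.mem_univ, true_and]
    tauto
  have h2 : ∑ t ∈ (T2 G i j).filter (fun t => ¬ t.2.1 < t.2.2),
        (G t.2.1 t.1 + G t.1 t.2.1 + G t.1 t.2.2 + G t.2.2 t.1)
      = ∑ t ∈ T G i j, (G t.2.1 t.1 + G t.1 t.2.1 + G t.1 t.2.2 + G t.2.2 t.1) := by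
    refine Finset.sum_nbij (fun t => (t.1, t.2.2, t.2.1)) ?_ ?_ ?_ ?_
    · rintro ⟨y, x, z⟩ ht
      simp only [T2, Finset.mem_filter, Finset.mem_univ, true_and] at ht
      obtain ⟨⟨⟨hxy, hyz, hxz, e1, e2, e3, e4⟩, hi, hj, hij⟩, hnot⟩ := ht
      simp only [T, Finset.mem_filter, Finset.mem_univ, true_and]
      refine ⟨⟨hyz.symm, hxy.symm, hxz.symm, e4, e3, e2, e1⟩, ?_, ?_, hij,
        lt_of_le_of_ne (le_of_not_gt hnot) (Ne.symm hxz)⟩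
      · simp only [Finset.mem_insert, Finset.mem_singleton] at hi ⊢; tauto
      · simp only [Finset.mem_insert, Finset.mem_singleton] at hj ⊢; tauto
    · rintro ⟨y, x, z⟩ - ⟨y', x', z'⟩ - heq
      simp only [Prod.mk.injEq] at heq ⊢
      tauto
    · rintro ⟨y, x, z⟩ ht
      simp only [Finset.mem_coe, T, Finset.mem_filter, Finset.mem_univ, true_and] at ht
      obtain ⟨⟨hxy, hyz, hxz, e1, e2, e3, e4⟩, hi, hj, hij, hlt⟩ := ht
      refine ⟨(y, z, x), ?_, rfl⟩
      simp only [Finset.mem_coe, T2, Finset.mem_filter, Finset.mem_univ, true_and]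
      refine ⟨⟨⟨hyz.symm, hxy.symm, hxz.symm, e4, e3, e2, e1⟩, ?_, ?_, hij⟩, asymm hlt⟩
      · simp only [Finset.mem_insert, Finset.mem_singleton] at hi ⊢; tauto
      · simp only [Finset.mem_insert, Finset.mem_singleton] at hj ⊢; tauto
    · rintro ⟨y, x, z⟩ -
      ring
  rw [h1] at hsplit
  linarith

lemma split6 (G : Matrix (Fin n) (Fin n) ℝ) (i j y x z : Fin n) (w : ℝ) :
    (if (Cond G y x z ∧ i ∈ ({x, y, z} : Finset (Fin n)) ∧
        j ∈ ({x, y, z} : Finset (Fin n)) ∧ i ≠ j) then w else 0)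
    = (if (i = y ∧ j = x ∧ (Cond G y x z ∧ i ≠ j)) then w else 0)
    + (if (i = y ∧ j = z ∧ (Cond G y x z ∧ i ≠ j)) then w else 0)
    + (if (j = y ∧ i = x ∧ (Cond G y x z ∧ i ≠ j)) then w else 0)
    + (if (j = y ∧ i = z ∧ (Cond G y x z ∧ i ≠ j)) then w else 0)
    + (if (i = x ∧ j = z ∧ (Cond G y x z ∧ i ≠ j)) then w else 0)
    + (if (j = x ∧ i = z ∧ (Cond G y x z ∧ i ≠ j)) then w else 0) := by
  by_cases hc : Cond G y x z
  · by_cases hij : i ≠ j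
    · obtain ⟨hxy, hyz, hxz, -⟩ := id hc
      simp only [Finset.mem_insert, Finset.mem_singleton, hc, hij, true_and, and_true]
      by_cases h1 : i = x <;> by_cases h2 : i = y <;> by_cases h3 : i = z <;>
        by_cases h4 : j = x <;> by_cases h5 : j = y <;> by_cases h6 : j = z <;>
        simp_all
    · simp only [ne_eq, not_not] at hij
      simp [hij]
  · simp [hc]

lemma pinA (a b : Fin n) (P : Fin n × Fin n × Fin n → Prop) (f : Fin n × Fin n × Fin n → ℝ)
    [inst1 : ∀ t : Fin n × Fin n × Fin n, Decidable (a = t.1 ∧ b = t.2.1 ∧ P t)]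
    [inst2 : ∀ k : Fin n, Decidable (P (a, b, k))] :
    (∑ t : Fin n × Fin n × Fin n, if (a = t.1 ∧ b = t.2.1 ∧ P t) then f t else 0)
    = ∑ k : Fin n, if P (a, b, k) then f (a, b, k) else 0 := by
  rw [← Finset.sum_filter, ← Finset.sum_filter]
  refine (Finset.sum_nbij (fun k => (a, b, k)) ?_ ?_ ?_ ?_).symm
  · intro k hk
    exact Finset.mem_filter.mpr ⟨Finset.mem_univ _, rfl, rfl, (Finset.mem_filter.mp hk).2⟩
  · rintro k - k' - heq
    exact congrArg (fun t : Fin n × Fin n × Fin n => t.2.2) heq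
  · intro t ht
    simp only [Finset.mem_coe, Finset.mem_filter, Finset.mem_univ, true_and] at ht
    obtain ⟨h1, h2, h3⟩ := ht
    have he : (a, b, t.2.2) = t := by rw [h1, h2]
    refine ⟨t.2.2, ?_, he⟩
    simp only [Finset.mem_coe, Finset.mem_filter, Finset.mem_univ, true_and]
    rw [he]; exact h3
  · rintro k -
    rfl

lemma pinB (a b : Fin n) (P : Fin n × Fin n × Fin n → Prop) (f : Fin n × Fin n × Fin n → ℝ)
    [inst1 : ∀ t : Fin n × Fin n × Fin n, Decidable (a = t.1 ∧ b = t.2.2 ∧ P t)]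
    [inst2 : ∀ k : Fin n, Decidable (P (a, k, b))] :
    (∑ t : Fin n × Fin n × Fin n, if (a = t.1 ∧ b = t.2.2 ∧ P t) then f t else 0)
    = ∑ k : Fin n, if P (a, k, b) then f (a, k, b) else 0 := by
  rw [← Finset.sum_filter, ← Finset.sum_filter]
  refine (Finset.sum_nbij (fun k => (a, k, b)) ?_ ?_ ?_ ?_).symm
  · intro k hk
    exact Finset.mem_filter.mpr ⟨Finset.mem_univ _, rfl, rfl, (Finset.mem_filter.mp hk).2⟩
  · rintro k - k' - heq
    exact congrArg (fun t : Fin n × Fin n × Fin n => t.2.1) heq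
  · intro t ht
    simp only [Finset.mem_coe, Finset.mem_filter, Finset.mem_univ, true_and] at ht
    obtain ⟨h1, h2, h3⟩ := ht
    have he : (a, t.2.1, b) = t := by rw [h1, h2]
    refine ⟨t.2.1, ?_, he⟩
    simp only [Finset.mem_coe, Finset.mem_filter, Finset.mem_univ, true_and]
    rw [he]; exact h3
  · rintro k -
    rfl

lemma pinC (a b : Fin n) (P : Fin n × Fin n × Fin n → Prop) (f : Fin n × Fin n × Fin n → ℝ)
    [inst1 : ∀ t : Fin n × Fin n × Fin n, Decidable (a = t.2.1 ∧ b = t.2.2 ∧ P t)]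
    [inst2 : ∀ k : Fin n, Decidable (P (k, a, b))] :
    (∑ t : Fin n × Fin n × Fin n, if (a = t.2.1 ∧ b = t.2.2 ∧ P t) then f t else 0)
    = ∑ k : Fin n, if P (k, a, b) then f (k, a, b) else 0 := by
  rw [← Finset.sum_filter, ← Finset.sum_filter]
  refine (Finset.sum_nbij (fun k => (k, a, b)) ?_ ?_ ?_ ?_).symm
  · intro k hk
    exact Finset.mem_filter.mpr ⟨Finset.mem_univ _, rfl, rfl, (Finset.mem_filter.mp hk).2⟩
  · rintro k - k' - heq
    exact congrArg (fun t : Fin n × Fin n × Fin n => t.1) heq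
  · intro t ht
    simp only [Finset.mem_coe, Finset.mem_filter, Finset.mem_univ, true_and] at ht
    obtain ⟨h1, h2, h3⟩ := ht
    have he : (t.1, a, b) = t := by rw [h1, h2]
    refine ⟨t.1, ?_, he⟩
    simp only [Finset.mem_coe, Finset.mem_filter, Finset.mem_univ, true_and]
    rw [he]; exact h3
  · rintro k -
    rfl

lemma ptA (G : Matrix (Fin n) (Fin n) ℝ) (i j k : Fin n) :
    (if (Cond G i j k ∧ i ≠ j) then G j i + G i j + G i k + G k i else 0)
    = Gdmat G i j * (Jdmat G i k * Jnmat n k j) + Jdmat G i j * (Gdmat G i k * Jnmat n k j) := by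
  have hne : ∀ p q : Fin n, (p, q) ∈ edgeFinset G → p ≠ q :=
    fun p q h => (Finset.mem_filter.mp h).2.1
  by_cases h1 : (i, j) ∈ edgeFinset G ∧ (j, i) ∈ edgeFinset G
  · by_cases h2 : (i, k) ∈ edgeFinset G ∧ (k, i) ∈ edgeFinset G
    · by_cases h3 : k ≠ j
      · rw [if_pos ⟨⟨hne _ _ h1.2, hne _ _ h2.1, Ne.symm h3, h1.2, h1.1, h2.1, h2.2⟩,
          hne _ _ h1.1⟩]
        simp only [Gdmat, Jdmat, Jnmat, if_pos h1, if_pos h2, if_pos h3]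
        ring
      · have hnc : ¬(Cond G i j k ∧ i ≠ j) := by
          rintro ⟨⟨-, -, hjk, -⟩, -⟩; exact h3 (Ne.symm hjk)
        rw [if_neg hnc]
        simp [Jnmat, h3]
    · have hnc : ¬(Cond G i j k ∧ i ≠ j) := by
        rintro ⟨⟨-, -, -, -, -, hik, hki⟩, -⟩; exact h2 ⟨hik, hki⟩
      rw [if_neg hnc]
      simp [Jdmat, Gdmat, h2]
  · have hnc : ¬(Cond G i j k ∧ i ≠ j) := by
      rintro ⟨⟨-, -, -, hji, hij, -⟩, -⟩; exact h1 ⟨hij, hji⟩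
    rw [if_neg hnc]
    simp [Jdmat, Gdmat, h1]

lemma ptA2 (G : Matrix (Fin n) (Fin n) ℝ) (i j k : Fin n) :
    (if (Cond G i k j ∧ i ≠ j) then G k i + G i k + G i j + G j i else 0)
    = Gdmat G i j * (Jdmat G i k * Jnmat n k j) + Jdmat G i j * (Gdmat G i k * Jnmat n k j) := by
  have hne : ∀ p q : Fin n, (p, q) ∈ edgeFinset G → p ≠ q :=
    fun p q h => (Finset.mem_filter.mp h).2.1
  by_cases h1 : (i, j) ∈ edgeFinset G ∧ (j, i) ∈ edgeFinset G
  · by_cases h2 : (i, k) ∈ edgeFinset G ∧ (k, i) ∈ edgeFinset G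
    · by_cases h3 : k ≠ j
      · rw [if_pos ⟨⟨Ne.symm (hne _ _ h2.1), hne _ _ h1.1, h3, h2.2, h2.1, h1.1, h1.2⟩,
          hne _ _ h1.1⟩]
        simp only [Gdmat, Jdmat, Jnmat, if_pos h1, if_pos h2, if_pos h3]
        ring
      · have hnc : ¬(Cond G i k j ∧ i ≠ j) := by
          rintro ⟨⟨-, -, hkj, -⟩, -⟩; exact h3 hkj
        rw [if_neg hnc]
        simp [Jnmat, h3]
    · have hnc : ¬(Cond G i k j ∧ i ≠ j) := by
        rintro ⟨⟨-, -, -, hki, hik, -⟩, -⟩; exact h2 ⟨hik, hki⟩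
      rw [if_neg hnc]
      simp [Jdmat, Gdmat, h2]
  · have hnc : ¬(Cond G i k j ∧ i ≠ j) := by
      rintro ⟨⟨-, -, -, -, -, hij, hji⟩, -⟩; exact h1 ⟨hij, hji⟩
    rw [if_neg hnc]
    simp [Jdmat, Gdmat, h1]

lemma ptC (G : Matrix (Fin n) (Fin n) ℝ) (i j k : Fin n) :
    (if (Cond G k i j ∧ i ≠ j) then G i k + G k i + G k j + G j k else 0)
    = Jnmat n i j * (Jdmat G i k * Gdmat G k j) + Jnmat n j i * (Jdmat G j k * Gdmat G k i) := by
  have hne : ∀ p q : Fin n, (p, q) ∈ edgeFinset G → p ≠ q :=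
    fun p q h => (Finset.mem_filter.mp h).2.1
  by_cases h3 : i ≠ j
  · by_cases h2 : (i, k) ∈ edgeFinset G ∧ (k, i) ∈ edgeFinset G
    · by_cases hc : (k, j) ∈ edgeFinset G ∧ (j, k) ∈ edgeFinset G
      · rw [if_pos ⟨⟨hne _ _ h2.1, hne _ _ hc.1, h3, h2.1, h2.2, hc.1, hc.2⟩, h3⟩]
        have h2' : (k, i) ∈ edgeFinset G ∧ (i, k) ∈ edgeFinset G := ⟨h2.2, h2.1⟩
        have hc' : (j, k) ∈ edgeFinset G ∧ (k, j) ∈ edgeFinset G := ⟨hc.2, hc.1⟩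
        simp only [Gdmat, Jdmat, Jnmat, if_pos h2, if_pos hc, if_pos h2', if_pos hc',
          if_pos h3, if_pos (Ne.symm h3)]
        ring
      · have hnc : ¬(Cond G k i j ∧ i ≠ j) := by
          rintro ⟨⟨-, -, -, -, -, hkj, hjk⟩, -⟩; exact hc ⟨hkj, hjk⟩
        rw [if_neg hnc]
        have hc' : ¬((j, k) ∈ edgeFinset G ∧ (k, j) ∈ edgeFinset G) :=
          fun h => hc ⟨h.2, h.1⟩
        simp [Gdmat, Jdmat, hc, hc']
    · have hnc : ¬(Cond G k i j ∧ i ≠ j) := by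
        rintro ⟨⟨-, -, -, hik, hki, -⟩, -⟩; exact h2 ⟨hik, hki⟩
      rw [if_neg hnc]
      have h2' : ¬((k, i) ∈ edgeFinset G ∧ (i, k) ∈ edgeFinset G) :=
        fun h => h2 ⟨h.2, h.1⟩
      simp [Gdmat, Jdmat, h2, h2']
  · rw [not_ne_iff] at h3
    subst h3
    simp [Jnmat]

lemma ptC2 (G : Matrix (Fin n) (Fin n) ℝ) (i j k : Fin n) :
    (if (Cond G k j i ∧ i ≠ j) then G j k + G k j + G k i + G i k else 0)
    = Jnmat n i j * (Jdmat G i k * Gdmat G k j) + Jnmat n j i * (Jdmat G j k * Gdmat G k i) := by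
  have hne : ∀ p q : Fin n, (p, q) ∈ edgeFinset G → p ≠ q :=
    fun p q h => (Finset.mem_filter.mp h).2.1
  by_cases h3 : i ≠ j
  · by_cases h2 : (i, k) ∈ edgeFinset G ∧ (k, i) ∈ edgeFinset G
    · by_cases hc : (k, j) ∈ edgeFinset G ∧ (j, k) ∈ edgeFinset G
      · rw [if_pos ⟨⟨hne _ _ hc.2, hne _ _ h2.2, Ne.symm h3, hc.2, hc.1, h2.2, h2.1⟩, h3⟩]
        have h2' : (k, i) ∈ edgeFinset G ∧ (i, k) ∈ edgeFinset G := ⟨h2.2, h2.1⟩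
        have hc' : (j, k) ∈ edgeFinset G ∧ (k, j) ∈ edgeFinset G := ⟨hc.2, hc.1⟩
        simp only [Gdmat, Jdmat, Jnmat, if_pos h2, if_pos hc, if_pos h2', if_pos hc',
          if_pos h3, if_pos (Ne.symm h3)]
        ring
      · have hnc : ¬(Cond G k j i ∧ i ≠ j) := by
          rintro ⟨⟨-, -, -, hjk, hkj, -⟩, -⟩; exact hc ⟨hkj, hjk⟩
        rw [if_neg hnc]
        have hc' : ¬((j, k) ∈ edgeFinset G ∧ (k, j) ∈ edgeFinset G) :=
          fun h => hc ⟨h.2, h.1⟩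
        simp [Gdmat, Jdmat, hc, hc']
    · have hnc : ¬(Cond G k j i ∧ i ≠ j) := by
        rintro ⟨⟨-, -, -, -, -, hki, hik⟩, -⟩; exact h2 ⟨hik, hki⟩
      rw [if_neg hnc]
      have h2' : ¬((k, i) ∈ edgeFinset G ∧ (i, k) ∈ edgeFinset G) :=
        fun h => h2 ⟨h.2, h.1⟩
      simp [Gdmat, Jdmat, h2, h2']
  · rw [not_ne_iff] at h3
    subst h3
    simp [Jnmat]

lemma sum_T2_eq (G : Matrix (Fin n) (Fin n) ℝ) (i j : Fin n) :
    ∑ t ∈ T2 G i j, (G t.2.1 t.1 + G t.1 t.2.1 + G t.1 t.2.2 + G t.2.2 t.1)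
    = 2 * (Jdmat G i j * (∑ k, Gdmat G i k * Jnmat n k j)
        + Gdmat G i j * (∑ k, Jdmat G i k * Jnmat n k j)
        + Jnmat n i j * (∑ k, Jdmat G i k * Gdmat G k j)
        + Jdmat G j i * (∑ k, Gdmat G j k * Jnmat n k i)
        + Gdmat G j i * (∑ k, Jdmat G j k * Jnmat n k i)
        + Jnmat n j i * (∑ k, Jdmat G j k * Gdmat G k i)) := by
  rw [T2, Finset.sum_filter]
  rw [Finset.sum_congr rfl (fun t (_ : t ∈ Finset.univ) =>
    split6 G i j t.1 t.2.1 t.2.2 (G t.2.1 t.1 + G t.1 t.2.1 + G t.1 t.2.2 + G t.2.2 t.1))]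
  simp only [Finset.sum_add_distrib]
  rw [pinA i j (fun t => Cond G t.1 t.2.1 t.2.2 ∧ i ≠ j)
      (fun t => G t.2.1 t.1 + G t.1 t.2.1 + G t.1 t.2.2 + G t.2.2 t.1),
    pinB i j (fun t => Cond G t.1 t.2.1 t.2.2 ∧ i ≠ j)
      (fun t => G t.2.1 t.1 + G t.1 t.2.1 + G t.1 t.2.2 + G t.2.2 t.1),
    pinA j i (fun t => Cond G t.1 t.2.1 t.2.2 ∧ i ≠ j)
      (fun t => G t.2.1 t.1 + G t.1 t.2.1 + G t.1 t.2.2 + G t.2.2 t.1),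
    pinB j i (fun t => Cond G t.1 t.2.1 t.2.2 ∧ i ≠ j)
      (fun t => G t.2.1 t.1 + G t.1 t.2.1 + G t.1 t.2.2 + G t.2.2 t.1),
    pinC i j (fun t => Cond G t.1 t.2.1 t.2.2 ∧ i ≠ j)
      (fun t => G t.2.1 t.1 + G t.1 t.2.1 + G t.1 t.2.2 + G t.2.2 t.1),
    pinC j i (fun t => Cond G t.1 t.2.1 t.2.2 ∧ i ≠ j)
      (fun t => G t.2.1 t.1 + G t.1 t.2.1 + G t.1 t.2.2 + G t.2.2 t.1)]
  simp only [Finset.mul_sum, ← Finset.sum_add_distrib]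
  refine Finset.sum_congr rfl fun k _ => ?_
  have e3 : (Cond G j i k ∧ i ≠ j) = (Cond G j i k ∧ j ≠ i) :=
    congrArg (fun p => Cond G j i k ∧ p) (propext ne_comm)
  have e4 : (Cond G j k i ∧ i ≠ j) = (Cond G j k i ∧ j ≠ i) :=
    congrArg (fun p => Cond G j k i ∧ p) (propext ne_comm)
  show (if (Cond G i j k ∧ i ≠ j) then G j i + G i j + G i k + G k i else 0)
    + (if (Cond G i k j ∧ i ≠ j) then G k i + G i k + G i j + G j i else 0)
    + (if (Cond G j i k ∧ i ≠ j) then G i j + G j i + G j k + G k j else 0)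
    + (if (Cond G j k i ∧ i ≠ j) then G k j + G j k + G j i + G i j else 0)
    + (if (Cond G k i j ∧ i ≠ j) then G i k + G k i + G k j + G j k else 0)
    + (if (Cond G k j i ∧ i ≠ j) then G j k + G k j + G k i + G i k else 0)
    = _
  simp only [e3, e4]
  rw [ptA G i j k, ptA2 G i j k, ptA G j i k, ptA2 G j i k, ptC G i j k, ptC2 G i j k]
  ring

end M13Aux

open M13Aux in
/-- **Functional MAM formula for the bi-directional 2-star motif `M₁₃`.** -/
theorem mam_M13_func
    (G : Matrix (Fin n) (Fin n) ℝ)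
    (hpos : ∀ i j, 0 ≤ G i j) (hdiag : ∀ i, G i i = 0)
    (M13 : Motif 3) (hM : M13.edges = {((0 : Fin 3), 1), (1, 0), (1, 2), (2, 1)}) :
    mamFunc M13 Finset.univ G =
      (1 / 4 : ℝ) •
        (had (Jdmat G) (Gdmat G * Jnmat n) + had (Gdmat G) (Jdmat G * Jnmat n) +
          had (Jnmat n) (Jdmat G * Gdmat G) +
          (had (Jdmat G) (Gdmat G * Jnmat n) + had (Gdmat G) (Jdmat G * Jnmat n) +
            had (Jnmat n) (Jdmat G * Gdmat G))ᵀ) := by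
  funext i j
  have hcard : M13.edges.card = 4 := by rw [hM]; decide
  simp only [mamFunc, hcard]
  rw [sum_instances G M13 hM i j]
  have h2 := sum_T2_double G i j
  have h3 := sum_T2_eq G i j
  have hT : ∑ t ∈ T G i j, (G t.2.1 t.1 + G t.1 t.2.1 + G t.1 t.2.2 + G t.2.2 t.1)
      = Jdmat G i j * (∑ k, Gdmat G i k * Jnmat n k j)
        + Gdmat G i j * (∑ k, Jdmat G i k * Jnmat n k j)
        + Jnmat n i j * (∑ k, Jdmat G i k * Gdmat G k j)
        + Jdmat G j i * (∑ k, Gdmat G j k * Jnmat n k i)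
        + Gdmat G j i * (∑ k, Jdmat G j k * Jnmat n k i)
        + Jnmat n j i * (∑ k, Jdmat G j k * Gdmat G k i) := by linarith
  rw [hT]
  simp only [Matrix.smul_apply, Matrix.add_apply, Matrix.transpose_apply, had,
    Matrix.mul_apply, smul_eq_mul]
  push_cast
  ring
end
end

section
/- Let G be a weighted directed graph on vertex set V = {1,…,n} and let M_coll be the collider motif with vertices {1,2,3}, edges E_M = {(1,2),(3,2)}, and anchor set A = {1,3}. Then the functional motif adjacency matrix of M_coll in G satisfies M^func = (1/2)·(C + Cᵀ), where C = J_n ∘ (J Gᵀ); equivalently, M^func = (1/2)·J_n ∘ (J Gᵀ + G Jᵀ). -/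
open scoped Classical BigOperators Matrix

noncomputable section

variable {n m : ℕ}

section AuxCollider

variable {n : ℕ}

lemma mem_edgeFinset {G : Matrix (Fin n) (Fin n) ℝ} {i j : Fin n} :
    (i, j) ∈ edgeFinset G ↔ i ≠ j ∧ 0 < G i j := by
  simp [edgeFinset]

/-- The collider instance on `i, j, k`. -/
def collH (i j k : Fin n) : Finset (Fin n) × Finset (Fin n × Fin n) :=
  ({i, j, k}, {(i, j), (k, j)})

lemma univ_fin3 : (Finset.univ : Finset (Fin 3)) = {0, 1, 2} := by decide

lemma image_fin3 {α : Type*} [DecidableEq α] (f : Fin 3 → α) :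
    Finset.image f Finset.univ = {f 0, f 1, f 2} := by
  rw [univ_fin3]; simp

lemma collH_iso (Mcoll : Motif 3) (hM : Mcoll.edges = {((0 : Fin 3), 1), (2, 1)})
    {i j k : Fin n} (hij : i ≠ j) (hkj : k ≠ j) (hik : i ≠ k) :
    IsIso Mcoll (collH i j k) ![i, j, k] := by
  have hji : j ≠ i := Ne.symm hij
  have hjk : j ≠ k := Ne.symm hkj
  have hinj : Function.Injective ![i, j, k] := by
    intro u v h
    fin_cases u <;> fin_cases v <;> simp_all
  refine ⟨hinj, ?_, ?_⟩
  · rw [image_fin3]; rfl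
  · intro u v
    rw [hM]
    fin_cases u <;> fin_cases v <;>
      simp_all [collH, Prod.ext_iff]

lemma collH_inst (G : Matrix (Fin n) (Fin n) ℝ)
    (Mcoll : Motif 3) (hM : Mcoll.edges = {((0 : Fin 3), 1), (2, 1)})
    {i j k : Fin n} (hik : i ≠ k)
    (h1 : (i, j) ∈ edgeFinset G) (h2 : (k, j) ∈ edgeFinset G) :
    IsFuncInstance Mcoll G (collH i j k) := by
  have hij := (mem_edgeFinset.mp h1).1
  have hkj := (mem_edgeFinset.mp h2).1
  refine ⟨?_, ?_, ![i, j, k], collH_iso Mcoll hM hij hkj hik⟩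
  · rintro ⟨x, y⟩ hxy
    simp only [collH, Finset.mem_insert, Finset.mem_singleton, Prod.mk.injEq] at hxy ⊢
    rcases hxy with ⟨rfl, rfl⟩ | ⟨rfl, rfl⟩ <;> tauto
  · intro e he
    simp only [collH, Finset.mem_insert, Finset.mem_singleton] at he
    rcases he with rfl | rfl <;> assumption

lemma collH_anch (Mcoll : Motif 3) (hM : Mcoll.edges = {((0 : Fin 3), 1), (2, 1)})
    (A : Finset (Fin 3)) (hA : A = {0, 2})
    {i j k : Fin n} (hij : i ≠ j) (hkj : k ≠ j) (hik : i ≠ k) :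
    AnchoredPair Mcoll A (collH i j k) i k :=
  ⟨![i, j, k], collH_iso Mcoll hM hij hkj hik, 0, by simp [hA], 2, by simp [hA],
    by decide, rfl, rfl⟩

lemma inst_eq_collH (G : Matrix (Fin n) (Fin n) ℝ)
    (Mcoll : Motif 3) (hM : Mcoll.edges = {((0 : Fin 3), 1), (2, 1)})
    (A : Finset (Fin 3)) (hA : A = {0, 2})
    {H : Finset (Fin n) × Finset (Fin n × Fin n)} {i k : Fin n}
    (hI : IsFuncInstance Mcoll G H) (hAP : AnchoredPair Mcoll A H i k) :
    ∃ j, i ≠ k ∧ (i, j) ∈ edgeFinset G ∧ (k, j) ∈ edgeFinset G ∧ H = collH i j k := by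
  obtain ⟨hGP, hsub, -⟩ := hI
  obtain ⟨φ, ⟨hinj, himg, hedge⟩, a, ha, b, hb, hab, rfl, rfl⟩ := hAP
  have hE : H.2 = {(φ 0, φ 1), (φ 2, φ 1)} := by
    ext ⟨x, y⟩
    constructor
    · intro hxy
      obtain ⟨hx, hy, -⟩ := hGP _ hxy
      rw [← himg] at hx hy
      simp only [Finset.mem_image, Finset.mem_univ, true_and] at hx hy
      obtain ⟨u, rfl⟩ := hx
      obtain ⟨v, rfl⟩ := hy
      have h := (hedge u v).mpr hxy
      rw [hM] at h
      simp only [Finset.mem_insert, Finset.mem_singleton, Prod.mk.injEq] at h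
      rcases h with ⟨rfl, rfl⟩ | ⟨rfl, rfl⟩ <;> simp
    · intro hxy
      simp only [Finset.mem_insert, Finset.mem_singleton, Prod.mk.injEq] at hxy
      rcases hxy with ⟨rfl, rfl⟩ | ⟨rfl, rfl⟩
      · exact (hedge 0 1).mp (by rw [hM]; simp)
      · exact (hedge 2 1).mp (by rw [hM]; simp)
  have hV : H.1 = {φ 0, φ 1, φ 2} := by rw [← himg, image_fin3]
  have h01 : (φ 0, φ 1) ∈ edgeFinset G := hsub (by rw [hE]; simp)
  have h21 : (φ 2, φ 1) ∈ edgeFinset G := hsub (by rw [hE]; simp)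
  rw [hA] at ha hb
  simp only [Finset.mem_insert, Finset.mem_singleton] at ha hb
  have hab' : φ a ≠ φ b := fun h => hab (hinj h)
  rcases ha with rfl | rfl <;> rcases hb with rfl | rfl
  · exact absurd rfl hab
  · refine ⟨φ 1, hab', h01, h21, ?_⟩
    have : H = (H.1, H.2) := rfl
    rw [this, hV, hE]; rfl
  · refine ⟨φ 1, hab', h21, h01, ?_⟩
    have : H = (H.1, H.2) := rfl
    rw [this, hV, hE]
    simp only [collH, Prod.mk.injEq]
    constructor
    · ext x; simp; tauto
    · ext x; simp; tauto
  · exact absurd rfl hab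

lemma mamFunc_collider (G : Matrix (Fin n) (Fin n) ℝ)
    (Mcoll : Motif 3) (hM : Mcoll.edges = {((0 : Fin 3), 1), (2, 1)})
    (A : Finset (Fin 3)) (hA : A = {0, 2}) (i k : Fin n) :
    mamFunc Mcoll A G i k =
      (1 / 2 : ℝ) * ∑ j, (if i ≠ k ∧ (i, j) ∈ edgeFinset G ∧ (k, j) ∈ edgeFinset G
        then G i j + G k j else 0) := by
  have hcard : (Mcoll.edges.card : ℝ) = 2 := by
    rw [hM]
    norm_num [show ({((0 : Fin 3), 1), (2, 1)} : Finset (Fin 3 × Fin 3)).card = 2 from by decide]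
  unfold mamFunc
  rw [hcard]
  congr 1
  rw [← Finset.sum_filter, ← Finset.sum_filter]
  symm
  apply Finset.sum_bij (fun j _ => collH i j k)
  · intro j hj
    simp only [Finset.mem_filter, Finset.mem_univ, true_and] at hj ⊢
    obtain ⟨hik, h1, h2⟩ := hj
    exact ⟨collH_inst G Mcoll hM hik h1 h2,
      collH_anch Mcoll hM A hA (mem_edgeFinset.mp h1).1 (mem_edgeFinset.mp h2).1 hik⟩
  · intro j1 h1 j2 h2 heq
    simp only [Finset.mem_filter, Finset.mem_univ, true_and] at h1
    have h := congrArg Prod.snd heq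
    simp only [collH] at h
    have : (i, j1) ∈ ({(i, j2), (k, j2)} : Finset (Fin n × Fin n)) := by
      rw [← h]; simp
    simp only [Finset.mem_insert, Finset.mem_singleton, Prod.mk.injEq] at this
    rcases this with ⟨-, rfl⟩ | ⟨-, rfl⟩ <;> rfl
  · intro H hH
    simp only [Finset.mem_filter, Finset.mem_univ, true_and] at hH
    obtain ⟨j, hik, hj1, hj2, rfl⟩ := inst_eq_collH G Mcoll hM A hA hH.1 hH.2
    exact ⟨j, by simp [hik, hj1, hj2], rfl⟩
  · intro j hj
    simp only [Finset.mem_filter, Finset.mem_univ, true_and] at hj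
    simp only [collH]
    rw [Finset.sum_pair (fun h => hj.1 (congrArg Prod.fst h))]

end AuxCollider

/-- **Functional MAM formula for the collider motif.** -/
theorem mam_collider_func
    (G : Matrix (Fin n) (Fin n) ℝ)
    (hpos : ∀ i j, 0 ≤ G i j) (hdiag : ∀ i, G i i = 0)
    (Mcoll : Motif 3) (hM : Mcoll.edges = {((0 : Fin 3), 1), (2, 1)})
    (A : Finset (Fin 3)) (hA : A = {0, 2}) :
    mamFunc Mcoll A G =
      (1 / 2 : ℝ) • (had (Jnmat n) (Jmat G * Gᵀ) + (had (Jnmat n) (Jmat G * Gᵀ))ᵀ) ∧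
    mamFunc Mcoll A G =
      (1 / 2 : ℝ) • had (Jnmat n) (Jmat G * Gᵀ + G * (Jmat G)ᵀ) := by
  have hzero : ∀ a b : Fin n, (a, b) ∉ edgeFinset G → G a b = 0 := by
    intro a b h
    rcases eq_or_ne a b with rfl | hab
    · exact hdiag a
    · rcases (hpos a b).lt_or_eq with h' | h'
      · exact absurd (mem_edgeFinset.mpr ⟨hab, h'⟩) h
      · exact h'.symm
  have entry : ∀ i k : Fin n, mamFunc Mcoll A G i k =
      (1 / 2 : ℝ) * ((if i = k then (0 : ℝ) else 1) *
        ((∑ j, Jmat G i j * G k j) + ∑ j, Jmat G k j * G i j)) := by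
    intro i k
    rw [mamFunc_collider G Mcoll hM A hA]
    by_cases hik : i = k
    · subst hik
      simp
    · rw [if_neg hik, one_mul, ← Finset.sum_add_distrib]
      congr 1
      apply Finset.sum_congr rfl
      intro j _
      rcases Decidable.em ((i, j) ∈ edgeFinset G) with h1 | h1 <;>
        rcases Decidable.em ((k, j) ∈ edgeFinset G) with h2 | h2
      · simp only [Jmat, if_pos h1, if_pos h2, one_mul]
        rw [if_pos ⟨hik, h1, h2⟩]
        ring
      · simp [Jmat, h1, h2, hik, hzero _ _ h2]
      · simp [Jmat, h1, h2, hik, hzero _ _ h1]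
      · simp [Jmat, h1, h2, hik]
  constructor
  · ext i k
    rw [entry i k]
    simp only [Matrix.smul_apply, Matrix.add_apply, Matrix.transpose_apply, had,
      Jnmat, Matrix.mul_apply, smul_eq_mul, ne_eq, ite_not]
    by_cases hik : i = k
    · subst hik; simp
    · rw [if_neg hik, if_neg (Ne.symm hik)]
      ring
  · ext i k
    rw [entry i k]
    simp only [Matrix.smul_apply, Matrix.add_apply, Matrix.transpose_apply, had,
      Jnmat, Matrix.mul_apply, smul_eq_mul, ne_eq, ite_not]
    by_cases hik : i = k
    · subst hik; simp
    · rw [if_neg hik]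
      have hswap : ∑ j, G i j * Jmat G k j = ∑ j, Jmat G k j * G i j :=
        Finset.sum_congr rfl fun j _ => mul_comm _ _
      rw [hswap]
end
end
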